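/- Let b ≥ 2 and n ≥ 1 be integers and define z_n := ∑_{t ∈ {0,…,b−1}ⁿ} ∑_{i=1}^{n} ∑_{j=1}^{n} b^{i−j} t_i t_j, where the outer sum runs over all digit vectors t = (t₁,…,t_n) ∈ {0,…,b−1}ⁿ. Then z_n = (1/4)b^{2n+1} + (n/12)b^{n+2} − (1/2)b^{n+1} − (n/12)bⁿ + (1/4)b. -/

import Mathlib

open Finset

lemma count_lemma (b n : ℕ) (i j : Fin n) :
    ∑ t : Fin n → Fin b, ((t i : ℕ) : ℝ) * ((t j : ℕ) : ℝ) =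
      if i = j then (∑ x : Fin b, ((x:ℕ):ℝ)^2) * (b:ℝ)^(n-1)
      else (∑ x : Fin b, ((x:ℕ):ℝ))^2 * (b:ℝ)^(n-2) := by
  have key : ∀ t : Fin n → Fin b, ((t i : ℕ) : ℝ) * ((t j : ℕ) : ℝ) =
      ∏ k, ((if k = i then ((t k : ℕ):ℝ) else 1) * (if k = j then ((t k : ℕ):ℝ) else 1)) := by
    intro t
    rw [Finset.prod_mul_distrib, Finset.prod_ite_eq' univ i (fun k => ((t k : ℕ):ℝ)),
      Finset.prod_ite_eq' univ j (fun k => ((t k : ℕ):ℝ))]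
    simp
  simp_rw [key]
  rw [← Fintype.prod_sum (fun (k : Fin n) (x : Fin b) => ((if k = i then ((x : ℕ):ℝ) else 1) * (if k = j then ((x : ℕ):ℝ) else 1)))]
  by_cases hij : i = j
  · subst hij
    simp only [if_pos rfl, if_true]
    have : ∀ k : Fin n, (∑ x : Fin b, ((if k = i then ((x : ℕ):ℝ) else 1) * (if k = i then ((x : ℕ):ℝ) else 1)))
        = if k = i then (∑ x : Fin b, ((x:ℕ):ℝ)^2) else (b:ℝ) := by
      intro k
      by_cases h : k = i <;> simp [h, sq]
    simp_rw [this]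
    rw [← Finset.mul_prod_erase univ _ (Finset.mem_univ i), if_pos rfl]
    rw [Finset.prod_congr rfl (fun k hk => if_neg (Finset.ne_of_mem_erase hk)),
      Finset.prod_const, Finset.card_erase_of_mem (Finset.mem_univ i), Finset.card_univ,
      Fintype.card_fin]
  · rw [if_neg hij]
    have : ∀ k : Fin n, (∑ x : Fin b, ((if k = i then ((x : ℕ):ℝ) else 1) * (if k = j then ((x : ℕ):ℝ) else 1)))
        = if k = i then (∑ x : Fin b, ((x:ℕ):ℝ)) else if k = j then (∑ x : Fin b, ((x:ℕ):ℝ)) else (b:ℝ) := by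
      intro k
      by_cases h : k = i
      · subst h
        simp [hij]
      · by_cases h' : k = j <;> simp [h, h', Ne.symm hij]
    simp_rw [this]
    have hji : j ∈ Finset.univ.erase i := Finset.mem_erase.2 ⟨Ne.symm hij, Finset.mem_univ j⟩
    rw [← Finset.mul_prod_erase univ _ (Finset.mem_univ i), if_pos rfl,
        ← Finset.mul_prod_erase _ _ hji, if_neg (Ne.symm hij), if_pos rfl]
    have hc : ((univ.erase i).erase j).card = n - 2 := by
      rw [Finset.card_erase_of_mem hji, Finset.card_erase_of_mem (Finset.mem_univ i),
        Finset.card_univ, Fintype.card_fin]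
      omega
    have h2 : ∀ k ∈ (univ.erase i).erase j,
        (if k = i then (∑ x : Fin b, ((x:ℕ):ℝ)) else if k = j then (∑ x : Fin b, ((x:ℕ):ℝ)) else (b:ℝ)) = (b:ℝ) := by
      intro k hk
      simp [Finset.ne_of_mem_erase hk, Finset.ne_of_mem_erase (Finset.mem_of_mem_erase hk)]
    rw [Finset.prod_congr rfl h2, Finset.prod_const, hc]
    ring

lemma sum_id_real (m : ℕ) : ∑ x ∈ Finset.range m, (x:ℝ) = (m:ℝ)*((m:ℝ)-1)/2 := by
  induction m with
  | zero => simp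
  | succ k ih => rw [Finset.sum_range_succ, ih]; push_cast; ring

lemma sum_sq_real (m : ℕ) : ∑ x ∈ Finset.range m, (x:ℝ)^2 = (m:ℝ)*((m:ℝ)-1)*(2*(m:ℝ)-1)/6 := by
  induction m with
  | zero => simp
  | succ k ih => rw [Finset.sum_range_succ, ih]; push_cast; ring

lemma S1_val (b : ℕ) : ∑ x : Fin b, ((x:ℕ):ℝ) = (b:ℝ)*((b:ℝ)-1)/2 := by
  rw [Fin.sum_univ_eq_sum_range (fun x => ((x:ℕ):ℝ))]; exact sum_id_real b

lemma S2_val (b : ℕ) : ∑ x : Fin b, ((x:ℕ):ℝ)^2 = (b:ℝ)*((b:ℝ)-1)*(2*(b:ℝ)-1)/6 := by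
  rw [Fin.sum_univ_eq_sum_range (fun x => ((x:ℕ):ℝ)^2)]; exact sum_sq_real b

/-- Lemma 4.6: `z_n := ∑_{t ∈ {0,…,b−1}ⁿ} ∑_{i,j=1}^n b^{i−j} t_i t_j` equals
`(1/4)b^{2n+1} + (n/12)b^{n+2} − (1/2)b^{n+1} − (n/12)bⁿ + (1/4)b`. -/
theorem digit_double_sum (b n : ℕ) (hb : 2 ≤ b) (hn : 1 ≤ n) :
    (∑ t : Fin n → Fin b, ∑ i : Fin n, ∑ j : Fin n,
        (b:ℝ) ^ (((i:ℕ):ℤ) - ((j:ℕ):ℤ)) * ((t i : ℕ) : ℝ) * ((t j : ℕ) : ℝ))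
      = (1/4) * (b:ℝ) ^ (2*n + 1) + ((n:ℝ)/12) * (b:ℝ) ^ (n + 2)
        - (1/2) * (b:ℝ) ^ (n + 1) - ((n:ℝ)/12) * (b:ℝ) ^ n + (1/4) * (b:ℝ) := by
  have hb0 : (b:ℝ) ≠ 0 := by positivity
  have hb1 : (b:ℝ) ≠ 1 := by
    have : (2:ℝ) ≤ (b:ℝ) := by exact_mod_cast hb
    linarith
  set S1 : ℝ := ∑ x : Fin b, ((x:ℕ):ℝ) with hS1
  set S2 : ℝ := ∑ x : Fin b, ((x:ℕ):ℝ)^2 with hS2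
  have swap : (∑ t : Fin n → Fin b, ∑ i : Fin n, ∑ j : Fin n,
        (b:ℝ) ^ (((i:ℕ):ℤ) - ((j:ℕ):ℤ)) * ((t i : ℕ) : ℝ) * ((t j : ℕ) : ℝ))
      = ∑ i : Fin n, ∑ j : Fin n, (b:ℝ) ^ (((i:ℕ):ℤ) - ((j:ℕ):ℤ)) *
          ∑ t : Fin n → Fin b, ((t i : ℕ) : ℝ) * ((t j : ℕ) : ℝ) := by
    rw [Finset.sum_comm]
    refine Finset.sum_congr rfl fun i _ => ?_
    rw [Finset.sum_comm]
    refine Finset.sum_congr rfl fun j _ => ?_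
    rw [Finset.mul_sum]
    exact Finset.sum_congr rfl fun t _ => by ring
  rw [swap]
  simp_rw [count_lemma b n]
  have step : ∀ i j : Fin n, (b:ℝ) ^ (((i:ℕ):ℤ) - ((j:ℕ):ℤ)) *
        (if i = j then S2 * (b:ℝ)^(n-1) else S1^2 * (b:ℝ)^(n-2))
      = S1^2 * (b:ℝ)^((n:ℤ)-2) * (b:ℝ) ^ (((i:ℕ):ℤ) - ((j:ℕ):ℤ)) +
        (if i = j then S2 * (b:ℝ)^(n-1) - S1^2 * (b:ℝ)^((n:ℤ)-2) else 0) := by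
    intro i j
    by_cases hij : i = j
    · subst hij
      rw [if_pos rfl, if_pos rfl, sub_self, zpow_zero]
      ring
    · rw [if_neg hij, if_neg hij, add_zero]
      have hn2 : 2 ≤ n := by
        have hv : (i:ℕ) ≠ (j:ℕ) := fun h => hij (Fin.ext h)
        have h1 := i.isLt
        have h2 := j.isLt
        omega
      rw [show (n:ℤ) - 2 = ((n-2:ℕ):ℤ) by omega, zpow_natCast]
      ring
  rw [← hS1, ← hS2]
  simp_rw [step, Finset.sum_add_distrib, Finset.sum_ite_eq, Finset.mem_univ, if_true,
    Finset.sum_const, Finset.card_univ, Fintype.card_fin, nsmul_eq_mul]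
  have split_pow : ∀ i j : Fin n, (b:ℝ) ^ (((i:ℕ):ℤ) - ((j:ℕ):ℤ))
      = (b:ℝ)^(i:ℕ) * ((b:ℝ)⁻¹)^(j:ℕ) := by
    intro i j
    rw [zpow_sub₀ hb0, zpow_natCast, zpow_natCast, div_eq_mul_inv, inv_pow]
  simp_rw [split_pow, ← Finset.mul_sum, ← Finset.sum_mul]
  have hg1 : ∑ i : Fin n, (b:ℝ)^(i:ℕ) = ((b:ℝ)^n - 1)/((b:ℝ)-1) := by
    rw [Fin.sum_univ_eq_sum_range (fun i => (b:ℝ)^i), geom_sum_eq hb1]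
  have hbinv1 : (b:ℝ)⁻¹ ≠ 1 := fun h => hb1 (inv_eq_one.mp h)
  have hX0 : (b:ℝ)^n ≠ 0 := pow_ne_zero _ hb0
  have hbm1 : (b:ℝ) - 1 ≠ 0 := sub_ne_zero.2 hb1
  have hbinvm1 : (b:ℝ)⁻¹ - 1 ≠ 0 := sub_ne_zero.2 hbinv1
  have hg2 : ∑ j : Fin n, ((b:ℝ)⁻¹)^(j:ℕ) = ((b:ℝ)^n - 1) * (b:ℝ) / (((b:ℝ)-1) * (b:ℝ)^n) := by
    rw [Fin.sum_univ_eq_sum_range (fun j => ((b:ℝ)⁻¹)^j), geom_sum_eq hbinv1, inv_pow,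
      div_eq_div_iff hbinvm1 (mul_ne_zero hbm1 hX0)]
    field_simp
    ring
  rw [hg1, hg2, hS1, hS2, S1_val, S2_val]
  have hXpow1 : (b:ℝ)^(n-1) = (b:ℝ)^n / (b:ℝ) := by
    rw [eq_div_iff hb0, ← pow_succ, Nat.sub_add_cancel hn]
  have hzpow : (b:ℝ)^((n:ℤ)-2) = (b:ℝ)^n / (b:ℝ)^2 := by
    rw [zpow_sub₀ hb0, zpow_natCast, zpow_two, sq]
  rw [hXpow1, hzpow]
  have e1 : (b:ℝ)^(2*n+1) = ((b:ℝ)^n)^2 * (b:ℝ) := by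
    rw [pow_succ, pow_mul']
  have e2 : (b:ℝ)^(n+2) = (b:ℝ)^n * (b:ℝ)^2 := pow_add _ _ _
  have e3 : (b:ℝ)^(n+1) = (b:ℝ)^n * (b:ℝ) := pow_succ _ _
  rw [e1, e2, e3]
  field_simp
  ring
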